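/- In an entrenchment frame, if U is a deductively closed set of sentences with U ⊆ Coh(α), then U ∪ {α} is consistent (i.e., U, α ⊬ ⊥). -/
import Mathlib


/-- A propositional language: a type of sentences with boolean connectives. -/
structure Lang (L : Type) where
  or : L → L → L
  and : L → L → L
  not : L → L
  imp : L → L → L
  bot : L
  top : L

/-- A classical valuation of the language: respects all connectives. -/
def Lang.Val {L : Type} (S : Lang L) (v : L → Prop) : Prop :=
  (∀ a b, v (S.or a b) ↔ v a ∨ v b) ∧
  (∀ a b, v (S.and a b) ↔ v a ∧ v b) ∧
  (∀ a, v (S.not a) ↔ ¬ v a) ∧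
  (∀ a b, v (S.imp a b) ↔ (v a → v b)) ∧
  ¬ v S.bot ∧ v S.top

/-- Classical consequence from a set of premises. -/
def Lang.SEnt {L : Type} (S : Lang L) (X : Set L) (b : L) : Prop :=
  ∀ v, S.Val v → (∀ a ∈ X, v a) → v b

/-- Classical consequence between single sentences: α ⊢ β. -/
def Lang.ent {L : Type} (S : Lang L) (a b : L) : Prop := S.SEnt {a} b

/-- Deductive closure. -/
def Lang.Cn {L : Type} (S : Lang L) (X : Set L) : Set L := {b | S.SEnt X b}

/-- Coh(α) = {β | ¬ (β ⪯ ¬α)}. -/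
def Coh {L : Type} (S : Lang L) (pr : L → L → Prop) (a : L) : Set L :=
  {b | ¬ pr b (S.not a)}

/-- The base of α: deductively closed subsets of Coh(α). -/
def Base {L : Type} (S : Lang L) (pr : L → L → Prop) (a : L) : Set (Set L) :=
  {U | U = S.Cn U ∧ U ⊆ Coh S pr a}

/-- The maximal base of α. -/
def MaxBase {L : Type} (S : Lang L) (pr : L → L → Prop) (a : L) : Set (Set L) :=
  {U | U ∈ Base S pr a ∧ ∀ U', U' = S.Cn U' → U ⊂ U' → U' ∉ Base S pr a}

/-- Maxiconsistent inference: α |~⪯ β. -/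
def MInf {L : Type} (S : Lang L) (pr : L → L → Prop) (a b : L) : Prop :=
  ∀ U ∈ MaxBase S pr a, b ∈ S.Cn (U ∪ {a})

/-- In an entrenchment frame, a deductively closed U ⊆ Coh(α) is consistent with α. -/
theorem stmt9 {L : Type} (S : Lang L) (pr : L → L → Prop)
    (hrefl : ∀ a, pr a a)
    (hlm : ∀ a b c, S.ent a b → pr b c → pr a c)
    (hle : ∀ a b c, S.ent a b → S.ent b a → (pr c a ↔ pr c b))
    (a : L) (U : Set L) (hU : U = S.Cn U) (hsub : U ⊆ Coh S pr a) :
    ¬ S.SEnt (U ∪ {a}) S.bot := by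
  intro h
  have hna : S.not a ∈ S.Cn U := by
    intro v hv hvU
    have hnot := hv.2.2.1
    rw [hnot]
    intro hva
    exact hv.2.2.2.2.1 (h v hv (by
      intro b hb
      rcases hb with hb | hb
      · exact hvU b hb
      · rw [Set.mem_singleton_iff] at hb; subst hb; exact hva))
  rw [← hU] at hna
  exact hsub hna (hrefl _)
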